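/- Let a be a real number with √2 < a < 2, and set h = √(1 − a²/4). If a·h/(a + h) = h/(h + a/2), then 2a³ − 2a² − 3a + 2 = 0. -/

import Mathlib

/-- Puzzle 10: for the isosceles obtuse triangle with legs 1 and base `a`,
equality of the wedged square on the base with those on the legs forces the
Calabi cubic `2a³ − 2a² − 3a + 2 = 0`. -/
theorem stmt14 (a h : ℝ) (ha1 : Real.sqrt 2 < a) (ha2 : a < 2)
    (hh : h = Real.sqrt (1 - a ^ 2 / 4))
    (heq : a * h / (a + h) = h / (h + a / 2)) :
    2 * a ^ 3 - 2 * a ^ 2 - 3 * a + 2 = 0 := by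
  have ha0 : (1 : ℝ) < a := lt_trans (by
    nlinarith [Real.sq_sqrt (by norm_num : (2:ℝ) ≥ 0), Real.sqrt_nonneg 2]) ha1
  have hpos : 0 < 1 - a ^ 2 / 4 := by nlinarith
  have hh2 : h ^ 2 = 1 - a ^ 2 / 4 := by
    rw [hh, Real.sq_sqrt hpos.le]
  have hhpos : 0 < h := by rw [hh]; exact Real.sqrt_pos.mpr hpos
  have hd1 : a + h ≠ 0 := by positivity
  have hd2 : h + a / 2 ≠ 0 := by positivity
  have E : a * h * (h + a / 2) = h * (a + h) := by
    field_simp at heq; linear_combination (h / 2) * heq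
  -- divide by h: a*h + a^2/2 = a + h, so h*(a-1) = a - a^2/2
  have E2 : h * (a - 1) = a - a ^ 2 / 2 := by
    have := mul_left_cancel₀ (ne_of_gt hhpos) (by ring_nf; ring_nf at E; linarith : h * (a * h + a ^ 2 / 2) = h * (a + h))
    nlinarith
  nlinarith [sq_nonneg (h * (a - 1)), E2, hh2, sq_nonneg h, mul_self_nonneg (a - a^2/2)]
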